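/- For the single-server queue X_0 = 0, X_{t+1} = (X_t - 1)_+ + A_{t+1} with i.i.d. arrivals of generating function A, the generating function of the probability that the queue is empty satisfies Σ_{t≥0} P(X_t = 0) z^t = 1/(1 - T_A(z)), where T_A is the unique power series with T_A(0)=0 and T_A(z) = z·A(T_A(z)). -/

import Mathlib

open MeasureTheory ProbabilityTheory

namespace SingleQueueAux

def F : ℕ → (ℕ → ℕ) → ℕ
  | 0, _ => 0
  | (t+1), u => (F t u - 1) + u (t+1)

lemma F_dep : ∀ (t : ℕ) (u v : ℕ → ℕ), (∀ i, i ≤ t → u i = v i) → F t u = F t v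
  | 0, _, _, _ => rfl
  | (t+1), u, v, h => by
      have h1 := F_dep t u v (fun i hi => h i (hi.trans t.le_succ))
      simp only [F, h1, h (t+1) le_rfl]

variable {Ω : Type*} [MeasurableSpace Ω] {μ : Measure Ω}

lemma indep_aux
    (A : ℕ → Ω → ℕ) (hmeas : ∀ t, Measurable (A t))
    (hindep : iIndepFun A μ)
    (X : ℕ → Ω → ℕ)
    (hX0 : ∀ ω, X 0 ω = 0)
    (hXrec : ∀ t ω, X (t + 1) ω = (X t ω - 1) + A (t + 1) ω)
    (t : ℕ) : IndepFun (X t) (A (t+1)) μ := by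
  have hXF : ∀ s ω, X s ω = F s (fun i => A i ω) := by
    intro s
    induction s with
    | zero => intro ω; simp [F, hX0 ω]
    | succ s ih => intro ω; simp [F, hXrec s ω, ih ω]
  classical
  set S : Finset ℕ := Finset.range (t+1) with hS
  set T : Finset ℕ := {t+1} with hT
  have hd : Disjoint S T := by
    simp [hS, hT, Finset.disjoint_singleton_right]
  have hIF := hindep.indepFun_finset S T hd hmeas
  set g : (S → ℕ) → ℕ := fun v => F t (fun i => if h : i ∈ S then v ⟨i, h⟩ else 0) with hg
  set k : (T → ℕ) → ℕ := fun v => v ⟨t+1, by simp [hT]⟩ with hk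
  have h1 : X t = g ∘ (fun ω (i : S) => A i ω) := by
    funext ω
    simp only [Function.comp_apply, hg, hXF t ω]
    refine F_dep t _ _ ?_
    intro i hi
    rw [dif_pos (by simp [hS]; omega)]
  have h2 : A (t+1) = k ∘ (fun ω (i : T) => A i ω) := by
    funext ω; rfl
  rw [h1, h2]
  exact hIF.comp (measurable_of_countable g) (measurable_of_countable k)

lemma conv_aux {U V : Ω → ℕ} (hU : Measurable U) (hV : Measurable V)
    (h : IndepFun U V μ) (n : ℕ) :
    μ {ω | U ω + V ω = n}
      = ∑ kl ∈ Finset.HasAntidiagonal.antidiagonal n, μ {ω | U ω = kl.1} * μ {ω | V ω = kl.2} := by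
  classical
  have hset : {ω | U ω + V ω = n}
      = ⋃ kl ∈ Finset.HasAntidiagonal.antidiagonal n, (U ⁻¹' {kl.1} ∩ V ⁻¹' {kl.2}) := by
    ext ω
    simp only [Set.mem_setOf_eq, Set.mem_iUnion, Set.mem_inter_iff, Set.mem_preimage,
      Set.mem_singleton_iff, Finset.HasAntidiagonal.mem_antidiagonal]
    constructor
    · intro hn; exact ⟨(U ω, V ω), hn, rfl, rfl⟩
    · rintro ⟨kl, hkl, h1, h2⟩; rw [← hkl, h1, h2]
  rw [hset, measure_biUnion_finset]
  · refine Finset.sum_congr rfl ?_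
    intro kl _
    rw [h.measure_inter_preimage_eq_mul _ _ (measurableSet_singleton _)
      (measurableSet_singleton _)]
    rfl
  · intro kl _ kl' _ hne
    refine Set.disjoint_left.2 ?_
    rintro ω ⟨h1, h2⟩ ⟨h3, h4⟩
    apply hne
    simp only [Set.mem_preimage, Set.mem_singleton_iff] at h1 h2 h3 h4
    exact Prod.ext (h1 ▸ h3.symm ▸ rfl) (h2 ▸ h4.symm ▸ rfl)
  · intro kl _
    exact (hU (measurableSet_singleton _)).inter (hV (measurableSet_singleton _))

lemma fiber_tsum_one [IsProbabilityMeasure μ] {f : Ω → ℕ} (hf : Measurable f) :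
    ∑' n, μ {ω | f ω = n} = 1 := by
  have hd : Pairwise (Function.onFun Disjoint (fun n => f ⁻¹' {n})) := by
    intro m n hmn
    refine Set.disjoint_left.2 ?_
    intro ω h1 h2
    simp only [Set.mem_preimage, Set.mem_singleton_iff] at h1 h2
    exact hmn (h1 ▸ h2 ▸ rfl)
  have h1 : (⋃ n, f ⁻¹' {n}) = Set.univ := by
    ext ω; simp
  have h2 := measure_iUnion (μ := μ) hd (fun n => hf (measurableSet_singleton n))
  rw [h1, measure_univ] at h2
  exact h2.symm

lemma fiber_summable [IsProbabilityMeasure μ] {f : Ω → ℕ} (hf : Measurable f) :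
    Summable (fun n => (μ {ω | f ω = n}).toReal) := by
  refine ENNReal.summable_toReal ?_
  rw [fiber_tsum_one hf]
  exact ENNReal.one_ne_top

lemma fiber_tsum_one' [IsProbabilityMeasure μ] {f : Ω → ℕ} (hf : Measurable f) :
    ∑' n, (μ {ω | f ω = n}).toReal = 1 := by
  rw [← ENNReal.tsum_toReal_eq (fun n => measure_ne_top μ _), fiber_tsum_one hf]
  simp

lemma toReal_prob_le_one (s : Set Ω) [IsProbabilityMeasure μ] : (μ s).toReal ≤ 1 := by
  have h := prob_le_one (μ := μ) (s := s)
  have := ENNReal.toReal_mono ENNReal.one_ne_top h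
  simpa using this



lemma analytic_core (y z : ℝ) (hy0 : 0 < y) (hy1 : y < 1) (hz0 : 0 ≤ z) (hz1 : z < 1)
    (p r : ℕ → ℕ → ℝ) (a : ℕ → ℝ)
    (hpnn : ∀ t n, 0 ≤ p t n) (hpsum : ∀ t, Summable (p t)) (hptsum : ∀ t, ∑' n, p t n = 1)
    (hrnn : ∀ t m, 0 ≤ r t m) (hrsum : ∀ t, Summable (r t))
    (hann : ∀ n, 0 ≤ a n) (hasum : Summable a)
    (hp00 : p 0 0 = 1) (hp0s : ∀ n, p 0 (n+1) = 0)
    (hconv : ∀ t n, p (t+1) n = ∑ kl ∈ Finset.HasAntidiagonal.antidiagonal n, r t kl.1 * a kl.2)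
    (hr0 : ∀ t, r t 0 = p t 0 + p t 1) (hrs : ∀ t m, r t (m+1) = p t (m+2))
    (hfy : z = y * ∑' n, a n * z ^ n) :
    ∑' t, p t 0 * y ^ t = 1 / (1 - z) := by
  have hzn1 : ∀ n : ℕ, z ^ n ≤ 1 := fun n => pow_le_one₀ hz0 hz1.le
  have hzn0 : ∀ n : ℕ, 0 ≤ z ^ n := fun n => pow_nonneg hz0 n
  have hSz : ∀ (f : ℕ → ℝ), Summable f → (∀ n, 0 ≤ f n) →
      Summable (fun n => f n * z ^ n) := by
    intro f hf hf0
    refine Summable.of_nonneg_of_le (fun n => mul_nonneg (hf0 n) (hzn0 n)) ?_ hf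
    intro n
    exact mul_le_of_le_one_right (hf0 n) (hzn1 n)
  have hpzsum : ∀ t, Summable (fun n => p t n * z ^ n) := fun t => hSz _ (hpsum t) (hpnn t)
  have hrzsum : ∀ t, Summable (fun m => r t m * z ^ m) := fun t => hSz _ (hrsum t) (hrnn t)
  have hazsum : Summable (fun n => a n * z ^ n) := hSz _ hasum hann
  have hpshifted : ∀ t, Summable (fun m => p t (m+1) * z ^ m) := by
    intro t
    exact hSz _ ((summable_nat_add_iff 1).2 (hpsum t)) (fun m => hpnn t _)
  -- Cauchy product step
  have hGrec1 : ∀ t, (∑' n, p (t+1) n * z ^ n)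
      = (∑' m, r t m * z ^ m) * (∑' n, a n * z ^ n) := by
    intro t
    have hfg : Summable (fun x : ℕ × ℕ => (r t x.1 * z ^ x.1) * (a x.2 * z ^ x.2)) := by
      refine summable_mul_of_summable_norm (f := fun m => r t m * z ^ m)
        (g := fun n => a n * z ^ n) ?_ ?_
      · simpa only [Real.norm_eq_abs] using (hrzsum t).abs
      · simpa only [Real.norm_eq_abs] using hazsum.abs
    rw [Summable.tsum_mul_tsum_eq_tsum_sum_antidiagonal (hrzsum t) hazsum hfg]
    refine tsum_congr ?_
    intro n
    rw [hconv t n, Finset.sum_mul]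
    refine Finset.sum_congr rfl ?_
    intro kl hkl
    have hkln : kl.1 + kl.2 = n := Finset.HasAntidiagonal.mem_antidiagonal.1 hkl
    rw [← hkln, pow_add]
    ring
  -- R t = p t 0 + Hs t
  have hRtq : ∀ t, (∑' m, r t m * z ^ m) = p t 0 + ∑' m, p t (m+1) * z ^ m := by
    intro t
    rw [Summable.tsum_eq_zero_add (hrzsum t), Summable.tsum_eq_zero_add (hpshifted t)]
    simp only [pow_zero, mul_one, hr0 t]
    have h1 : ∀ m : ℕ, r t (m+1) * z ^ (m+1) = p t (m+2) * z ^ (m+1) := by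
      intro m; rw [hrs t m]
    rw [tsum_congr h1]
    ring
  -- G t = p t 0 + z * Hs t
  have hGzq : ∀ t, (∑' n, p t n * z ^ n) = p t 0 + z * ∑' m, p t (m+1) * z ^ m := by
    intro t
    rw [Summable.tsum_eq_zero_add (hpzsum t)]
    simp only [pow_zero, mul_one]
    have h2 : z * ∑' m, p t (m+1) * z ^ m = ∑' m, p t (m+1) * z ^ (m+1) := by
      rw [← tsum_mul_left]
      refine tsum_congr ?_
      intro m
      rw [pow_succ]
      ring
    rw [h2]
  -- recursion
  have hrec : ∀ t, y * (∑' n, p (t+1) n * z ^ n)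
      = (∑' n, p t n * z ^ n) - (1 - z) * p t 0 := by
    intro t
    rw [hGrec1 t, hGzq t, hRtq t]
    calc y * ((p t 0 + ∑' m, p t (m+1) * z ^ m) * ∑' n, a n * z ^ n)
        = (y * ∑' n, a n * z ^ n) * (p t 0 + ∑' m, p t (m+1) * z ^ m) := by ring
      _ = z * (p t 0 + ∑' m, p t (m+1) * z ^ m) := by rw [← hfy]
      _ = p t 0 + z * (∑' m, p t (m+1) * z ^ m) - (1 - z) * p t 0 := by ring
  -- bounds
  have hGnn : ∀ t, 0 ≤ ∑' n, p t n * z ^ n :=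
    fun t => tsum_nonneg (fun n => mul_nonneg (hpnn t n) (hzn0 n))
  have hGle : ∀ t, (∑' n, p t n * z ^ n) ≤ 1 := by
    intro t
    rw [← hptsum t]
    refine Summable.tsum_le_tsum ?_ (hpzsum t) (hpsum t)
    intro n
    exact mul_le_of_le_one_right (hpnn t n) (hzn1 n)
  have hqnn : ∀ t, 0 ≤ p t 0 := fun t => hpnn t 0
  have hqle : ∀ t, p t 0 ≤ 1 := by
    intro t
    rw [← hptsum t]
    exact Summable.le_tsum (hpsum t) 0 (fun j _ => hpnn t j)
  -- summability in t
  have hygeo : Summable (fun t : ℕ => y ^ t) := summable_geometric_of_lt_one hy0.le hy1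
  have hQsum : Summable (fun t => p t 0 * y ^ t) := by
    refine Summable.of_nonneg_of_le
      (fun t => mul_nonneg (hqnn t) (pow_nonneg hy0.le t)) ?_ hygeo
    intro t
    calc p t 0 * y ^ t ≤ 1 * y ^ t :=
          mul_le_mul_of_nonneg_right (hqle t) (pow_nonneg hy0.le t)
      _ = y ^ t := one_mul _
  have hGsum : Summable (fun t => (∑' n, p t n * z ^ n) * y ^ t) := by
    refine Summable.of_nonneg_of_le
      (fun t => mul_nonneg (hGnn t) (pow_nonneg hy0.le t)) ?_ hygeo
    intro t
    calc (∑' n, p t n * z ^ n) * y ^ t ≤ 1 * y ^ t :=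
          mul_le_mul_of_nonneg_right (hGle t) (pow_nonneg hy0.le t)
      _ = y ^ t := one_mul _
  -- G 0 = 1
  have hG0 : (∑' n, p 0 n * z ^ n) = 1 := by
    rw [Summable.tsum_eq_zero_add (hpzsum 0)]
    have h1 : ∀ n : ℕ, p 0 (n+1) * z ^ (n+1) = 0 := by
      intro n; rw [hp0s n]; ring
    rw [tsum_congr h1, tsum_zero, hp00]
    simp
  -- sum over t
  have hterm : ∀ t, (∑' n, p (t+1) n * z ^ n) * y ^ (t+1)
      = (∑' n, p t n * z ^ n) * y ^ t - (1 - z) * (p t 0 * y ^ t) := by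
    intro t
    have h1 : (∑' n, p (t+1) n * z ^ n) * y ^ (t+1)
        = (y * ∑' n, p (t+1) n * z ^ n) * y ^ t := by
      rw [pow_succ]; ring
    rw [h1, hrec t]
    ring
  have hshift := Summable.tsum_eq_zero_add hGsum
  rw [tsum_congr hterm] at hshift
  rw [Summable.tsum_sub hGsum (hQsum.mul_left (1 - z))] at hshift
  rw [tsum_mul_left, pow_zero, mul_one, hG0] at hshift
  have h1z : (0:ℝ) < 1 - z := by linarith
  rw [eq_div_iff (ne_of_gt h1z)]
  linarith


end SingleQueueAux

/-- for the single-server queue `X 0 = 0`, `X (t+1) = (X t - 1)₊ + A (t+1)`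
with i.i.d. arrivals of generating function `A`, the generating function of the empty-queue
probabilities satisfies `∑ₜ P(X t = 0) zᵗ = 1 / (1 - T_A(z))`, where `T_A` is the power
series with nonnegative coefficients, zero constant term, satisfying `T_A(z) = z·A(T_A(z))`. -/
theorem single_queue_empty_gf {Ω : Type*} [MeasurableSpace Ω] (μ : Measure Ω)
    [IsProbabilityMeasure μ]
    (A : ℕ → Ω → ℕ) (hmeas : ∀ t, Measurable (A t))
    (hindep : iIndepFun A μ)
    (hid : ∀ t, μ.map (A t) = μ.map (A 0))
    (X : ℕ → Ω → ℕ)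
    (hX0 : ∀ ω, X 0 ω = 0)
    (hXrec : ∀ t ω, X (t + 1) ω = (X t ω - 1) + A (t + 1) ω)
    (a : ℕ → ℝ) (ha : ∀ n, a n = (μ {ω | A 0 ω = n}).toReal)
    (tc : ℕ → ℝ) (htc0 : tc 0 = 0) (htcpos : ∀ n, 0 ≤ tc n)
    (htcsum : ∀ z ∈ Set.Icc (0 : ℝ) 1, Summable fun n => tc n * z ^ n)
    (hfix : ∀ z ∈ Set.Icc (0 : ℝ) 1,
      (∑' n, tc n * z ^ n) = z * ∑' n, a n * (∑' k, tc k * z ^ k) ^ n) :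
    ∀ z ∈ Set.Ioo (0 : ℝ) 1,
      (∑' t : ℕ, (μ {ω | X t ω = 0}).toReal * z ^ t)
        = 1 / (1 - ∑' n, tc n * z ^ n) := by
  classical
  intro y hy
  obtain ⟨hy0, hy1⟩ := hy
  -- measurability of X t
  have hXmeas : ∀ t, Measurable (X t) := by
    intro t
    induction t with
    | zero =>
      have h : X 0 = fun _ => 0 := funext hX0
      rw [h]; exact measurable_const
    | succ t ih =>
      have h : X (t+1) = fun ω => (X t ω - 1) + A (t+1) ω := funext (hXrec t)
      rw [h]
      exact ((measurable_of_countable (fun n : ℕ => n - 1)).comp ih).add (hmeas (t+1))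
  -- basic facts about a
  have hann : ∀ n, 0 ≤ a n := fun n => (ha n) ▸ ENNReal.toReal_nonneg
  have hasum : Summable a := by
    have h := SingleQueueAux.fiber_summable (μ := μ) (hmeas 0)
    have he : a = fun n => (μ {ω | A 0 ω = n}).toReal := funext ha
    rw [he]; exact h
  have hatsum : ∑' n, a n = 1 := by
    have h := SingleQueueAux.fiber_tsum_one' (μ := μ) (hmeas 0)
    rw [← h]
    exact tsum_congr (fun n => ha n)
  -- positivity of z = T(y)
  have hz0 : (0:ℝ) ≤ ∑' n, tc n * y ^ n :=
    tsum_nonneg (fun n => mul_nonneg (htcpos n) (pow_nonneg hy0.le n))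
  -- z < 1 via intermediate value theorem
  have hz1 : (∑' n, tc n * y ^ n) < 1 := by
    by_contra hcon
    push_neg at hcon
    set y' : ℝ := (1 + y) / 2 with hy'
    have hyy' : y ≤ y' := by rw [hy']; linarith
    have hy'1 : y' < 1 := by rw [hy']; linarith
    have hy'0 : (0:ℝ) ≤ y' := by rw [hy']; linarith
    have hcont : ContinuousOn (fun x => ∑' n, tc n * x ^ n) (Set.Icc 0 y') := by
      refine continuousOn_tsum (u := fun n => tc n * y' ^ n)
        (fun n => (continuous_const.mul (continuous_pow n)).continuousOn)
        (htcsum y' ⟨hy'0, hy'1.le⟩) ?_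
      intro n x hx
      rw [Real.norm_eq_abs, abs_of_nonneg (mul_nonneg (htcpos n) (pow_nonneg hx.1 n))]
      exact mul_le_mul_of_nonneg_left (pow_le_pow_left₀ hx.1 hx.2 n) (htcpos n)
    have hT0 : (fun x => ∑' n, tc n * x ^ n) 0 = 0 := by
      simp only []
      have h : ∀ n : ℕ, tc n * (0:ℝ) ^ n = 0 := by
        intro n
        cases n with
        | zero => simp [htc0]
        | succ m => simp
      rw [tsum_congr h, tsum_zero]
    have hsub : Set.Icc (0:ℝ) y ⊆ Set.Icc 0 y' := Set.Icc_subset_Icc le_rfl hyy'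
    have hivt := intermediate_value_Icc hy0.le (hcont.mono hsub)
    have h1mem : (1:ℝ) ∈ Set.Icc ((fun x => ∑' n, tc n * x ^ n) 0)
        ((fun x => ∑' n, tc n * x ^ n) y) := by
      rw [hT0]
      exact ⟨zero_le_one, hcon⟩
    obtain ⟨y0, hy0mem, hTy0⟩ := hivt h1mem
    have hy0Icc : y0 ∈ Set.Icc (0:ℝ) 1 := ⟨hy0mem.1, hy0mem.2.trans hy1.le⟩
    have hf := hfix y0 hy0Icc
    simp only [] at hTy0
    rw [hTy0] at hf
    simp only [one_pow, mul_one] at hf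
    rw [hatsum, mul_one] at hf
    have hlt : y0 < 1 := lt_of_le_of_lt hy0mem.2 hy1
    rw [← hf] at hlt
    exact absurd hlt (lt_irrefl 1)
  -- set up p and r
  have hYmeas : ∀ t, Measurable (fun ω => X t ω - 1) :=
    fun t => (measurable_of_countable (fun n : ℕ => n - 1)).comp (hXmeas t)
  have hidk : ∀ t k, μ {ω | A t ω = k} = μ {ω | A 0 ω = k} := by
    intro t k
    have h1 : μ {ω | A t ω = k} = μ.map (A t) {k} := by
      rw [Measure.map_apply (hmeas t) (measurableSet_singleton k)]; rfl
    rw [h1, hid t, Measure.map_apply (hmeas 0) (measurableSet_singleton k)]; rfl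
  -- the convolution identity
  have hconv : ∀ t n, (μ {ω | X (t+1) ω = n}).toReal
      = ∑ kl ∈ Finset.HasAntidiagonal.antidiagonal n,
          (μ {ω | X t ω - 1 = kl.1}).toReal * a kl.2 := by
    intro t n
    have hind : IndepFun (fun ω => X t ω - 1) (A (t+1)) μ := by
      have h0 := SingleQueueAux.indep_aux A hmeas hindep X hX0 hXrec t
      exact h0.comp (measurable_of_countable (fun n : ℕ => n - 1)) measurable_id
    have hseteq : {ω | X (t+1) ω = n} = {ω | (X t ω - 1) + A (t+1) ω = n} := by
      ext ω
      simp only [Set.mem_setOf_eq, hXrec t ω]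
    have hc := SingleQueueAux.conv_aux (hYmeas t) (hmeas (t+1)) hind n
    rw [hseteq, hc, ENNReal.toReal_sum (fun kl _ => ENNReal.mul_ne_top
      (measure_ne_top μ _) (measure_ne_top μ _))]
    refine Finset.sum_congr rfl ?_
    intro kl _
    rw [ENNReal.toReal_mul, hidk (t+1) kl.2, ha kl.2]
  -- r in terms of p
  have hr0 : ∀ t, (μ {ω | X t ω - 1 = 0}).toReal
      = (μ {ω | X t ω = 0}).toReal + (μ {ω | X t ω = 1}).toReal := by
    intro t
    have hset : {ω | X t ω - 1 = 0} = {ω | X t ω = 0} ∪ {ω | X t ω = 1} := by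
      ext ω
      simp only [Set.mem_setOf_eq, Set.mem_union]
      omega
    have hdisj : Disjoint {ω | X t ω = 0} {ω | X t ω = 1} := by
      refine Set.disjoint_left.2 ?_
      intro ω h1 h2
      simp only [Set.mem_setOf_eq] at h1 h2
      omega
    rw [hset, measure_union hdisj (hXmeas t (measurableSet_singleton 1)),
      ENNReal.toReal_add (measure_ne_top μ _) (measure_ne_top μ _)]
  have hrs : ∀ t m, (μ {ω | X t ω - 1 = m+1}).toReal = (μ {ω | X t ω = m+2}).toReal := by
    intro t m
    have hset : {ω | X t ω - 1 = m+1} = {ω | X t ω = m+2} := by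
      ext ω
      simp only [Set.mem_setOf_eq]
      omega
    rw [hset]
  -- initial condition
  have hp00 : (μ {ω | X 0 ω = 0}).toReal = 1 := by
    have h : {ω | X 0 ω = 0} = Set.univ := by
      ext ω; simp [hX0 ω]
    rw [h, measure_univ]; simp
  have hp0s : ∀ n : ℕ, (μ {ω | X 0 ω = n+1}).toReal = 0 := by
    intro n
    have h : {ω | X 0 ω = n+1} = ∅ := by
      ext ω; simp [hX0 ω]
    rw [h, measure_empty]; simp
  -- fixed point equation at y
  have hfy : (∑' n, tc n * y ^ n)
      = y * ∑' n, a n * (∑' m, tc m * y ^ m) ^ n := hfix y ⟨hy0.le, hy1.le⟩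
  -- apply the analytic core lemma
  exact SingleQueueAux.analytic_core y (∑' n, tc n * y ^ n) hy0 hy1 hz0 hz1
    (fun t n => (μ {ω | X t ω = n}).toReal)
    (fun t m => (μ {ω | X t ω - 1 = m}).toReal)
    a
    (fun t n => ENNReal.toReal_nonneg)
    (fun t => SingleQueueAux.fiber_summable (hXmeas t))
    (fun t => SingleQueueAux.fiber_tsum_one' (hXmeas t))
    (fun t m => ENNReal.toReal_nonneg)
    (fun t => SingleQueueAux.fiber_summable (hYmeas t))
    hann hasum hp00 hp0s hconv hr0 hrs hfy
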